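/- arXiv:1101.5662 — 4 statements merged into one kernel-verified Lean document; each statement's English description precedes it below -/
import Mathlib

section
/- Let Q be a positive-definite integral lattice that contains two orthogonal vectors of norm 1 (i.e., represents ⟨1⟩ ⊕ ⟨1⟩) and three pairwise orthogonal vectors of norm 2 (i.e., represents ⟨2⟩ ⊕ ⟨2⟩ ⊕ ⟨2⟩). Then Q contains three pairwise orthogonal vectors of norms 1, 1, and 2 respectively (i.e., Q represents ⟨1⟩ ⊕ ⟨1⟩ ⊕ ⟨2⟩). -/
private lemma bil_nonneg {Q : Type*} [AddCommGroup Q] [Module ℤ Q] (B : LinearMap.BilinForm ℤ Q)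
    (hpos : ∀ x : Q, x ≠ 0 → 0 < B x x) (z : Q) : 0 ≤ B z z := by
  rcases eq_or_ne z 0 with h | h
  · simp [h]
  · exact (hpos z h).le

private lemma eq_zero_of_bil {Q : Type*} [AddCommGroup Q] [Module ℤ Q] (B : LinearMap.BilinForm ℤ Q)
    (hpos : ∀ x : Q, x ≠ 0 → 0 < B x x) (z : Q) (h : B z z ≤ 0) : z = 0 := by
  by_contra hz
  exact absurd (hpos z hz) (not_lt.mpr h)

private lemma expand3 {Q : Type*} [AddCommGroup Q] [Module ℤ Q] (B : LinearMap.BilinForm ℤ Q)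
    (x y e z : Q) (s t r : ℤ) :
    B (z - s•x - t•y - r•e) (z - s•x - t•y - r•e) =
      B z z - s * B z x - t * B z y - r * B z e
      - s * B x z + s*s * B x x + s*t* B x y + s*r* B x e
      - t * B y z + t*s * B y x + t*t* B y y + t*r* B y e
      - r * B e z + r*s * B e x + r*t* B e y + r*r* B e e := by
  simp [map_sub, map_smul, LinearMap.sub_apply, LinearMap.smul_apply, smul_eq_mul]
  ring

private lemma expand_pair {Q : Type*} [AddCommGroup Q] [Module ℤ Q] (B : LinearMap.BilinForm ℤ Q)
    (x e z : Q) (a b : ℤ) : B (a•x + b•e) z = a * B x z + b * B e z := by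
  simp [map_add, map_smul, LinearMap.add_apply, LinearMap.smul_apply, smul_eq_mul]

private lemma expand_sub {Q : Type*} [AddCommGroup Q] [Module ℤ Q] (B : LinearMap.BilinForm ℤ Q)
    (u x y x' z : Q) (a b : ℤ) :
    B (u - a•x - b•y - (0:ℤ)•x') z = B u z - a * B x z - b * B y z := by
  simp [map_sub, map_smul, LinearMap.sub_apply, LinearMap.smul_apply, smul_eq_mul]

private lemma one_le_sq' (s : ℤ) (h : s ≠ 0) : 1 ≤ s^2 := by
  have h1 := Int.one_le_abs h
  calc (1:ℤ) = 1^2 := by norm_num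
  _ ≤ |s|^2 := pow_le_pow_left₀ (by norm_num) h1 2
  _ = s^2 := sq_abs _

private lemma pm (s : ℤ) (h : s^2 = 1) : s = 1 ∨ s = -1 := by
  have h2 : (s-1)*(s+1) = 0 := by linear_combination h
  rcases mul_eq_zero.mp h2 with h | h
  · left; omega
  · right; omega

private lemma allA (s1 t1 s2 t2 s3 t3 : ℤ) (hs1 : s1^2 = 1) (ht1 : t1^2 = 1)
    (hs2 : s2^2 = 1) (ht2 : t2^2 = 1) (hs3 : s3^2 = 1) (ht3 : t3^2 = 1)
    (e1 : s1*s2 + t1*t2 = 0) (e2 : s1*s3 + t1*t3 = 0) (e3 : s2*s3 + t2*t3 = 0) : False := by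
  rcases pm _ hs1 with h|h <;> subst h <;>
  rcases pm _ ht1 with h|h <;> subst h <;>
  rcases pm _ hs2 with h|h <;> subst h <;>
  rcases pm _ ht2 with h|h <;> subst h <;>
  rcases pm _ hs3 with h|h <;> subst h <;>
  rcases pm _ ht3 with h|h <;> subst h <;> omega

private lemma classify {Q : Type*} [AddCommGroup Q] [Module ℤ Q] (B : LinearMap.BilinForm ℤ Q)
    (hsymm : ∀ x y : Q, B x y = B y x) (hpos : ∀ x : Q, x ≠ 0 → 0 < B x x)
    (x y z : Q) (hx : B x x = 1) (hy : B y y = 1) (hxy : B x y = 0) (hz : B z z = 2) :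
    (B x z = 0 ∧ B y z = 0) ∨
    ((B x z)^2 + (B y z)^2 = 1) ∨
    (z = (B x z) • x + (B y z) • y ∧ (B x z)^2 = 1 ∧ (B y z)^2 = 1) := by
  have hval : B (z - (B x z)•x - (B y z)•y - (0:ℤ)•x) (z - (B x z)•x - (B y z)•y - (0:ℤ)•x)
      = 2 - (B x z)^2 - (B y z)^2 := by
    rw [expand3, hsymm z x, hsymm z y, hsymm y x, hx, hy, hxy, hz]; ring
  have hkey : (B x z)^2 + (B y z)^2 ≤ 2 := by
    have h0 := bil_nonneg B hpos (z - (B x z)•x - (B y z)•y - (0:ℤ)•x)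
    rw [hval] at h0; linarith
  have hs1 : (B x z)^2 ≤ 1 := by
    have ha : B x z ≤ 1 := by nlinarith [sq_nonneg (B x z - 1), sq_nonneg (B y z)]
    have hb : -1 ≤ B x z := by nlinarith [sq_nonneg (B x z + 1), sq_nonneg (B y z)]
    nlinarith [mul_nonneg (by linarith : (0:ℤ) ≤ 1 - B x z) (by linarith : (0:ℤ) ≤ B x z + 1)]
  have ht1 : (B y z)^2 ≤ 1 := by
    have ha : B y z ≤ 1 := by nlinarith [sq_nonneg (B y z - 1), sq_nonneg (B x z)]
    have hb : -1 ≤ B y z := by nlinarith [sq_nonneg (B y z + 1), sq_nonneg (B x z)]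
    nlinarith [mul_nonneg (by linarith : (0:ℤ) ≤ 1 - B y z) (by linarith : (0:ℤ) ≤ B y z + 1)]
  have hs0 := sq_nonneg (B x z)
  have ht0 := sq_nonneg (B y z)
  have hcase : (B x z)^2 + (B y z)^2 = 0 ∨ (B x z)^2 + (B y z)^2 = 1 ∨
      (B x z)^2 + (B y z)^2 = 2 := by omega
  rcases hcase with h | h | h
  · left
    constructor
    · exact pow_eq_zero_iff (n := 2) (by norm_num) |>.mp (by omega)
    · exact pow_eq_zero_iff (n := 2) (by norm_num) |>.mp (by omega)
  · right; left; exact h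
  · right; right
    have hzz : B (z - (B x z)•x - (B y z)•y - (0:ℤ)•x) (z - (B x z)•x - (B y z)•y - (0:ℤ)•x) ≤ 0 := by
      rw [hval]; linarith
    have h0 := eq_zero_of_bil B hpos _ hzz
    rw [zero_smul, sub_zero, sub_eq_zero, sub_eq_iff_eq_add] at h0
    refine ⟨?_, by omega, by omega⟩
    rw [add_comm] at h0; exact h0

private lemma auxz {Q : Type*} [AddCommGroup Q] [Module ℤ Q] (B : LinearMap.BilinForm ℤ Q)
    (hsymm : ∀ x y : Q, B x y = B y x) (hpos : ∀ x : Q, x ≠ 0 → 0 < B x x)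
    (x y e : Q) (hx : B x x = 1) (hy : B y y = 1) (he : B e e = 1)
    (hxy : B x y = 0) (hxe : B x e = 0) (hye : B y e = 0)
    (ε : ℤ) (hε : ε^2 = 1) (z : Q) (hz : B z z = 2)
    (hzu : B x z * ε + B e z = 0) (hnz : ¬(B x z = 0 ∧ B y z = 0)) :
    (∃ a b c : Q, B a a = 1 ∧ B b b = 1 ∧ B c c = 2 ∧
      B a b = 0 ∧ B a c = 0 ∧ B b c = 0) ∨
    (z = (B x z) • x + (B e z) • e ∧ (B x z)^2 = 1) := by
  have hre : B e z = -(ε * B x z) := by linarith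
  have hval : B (z - (B x z)•x - (B y z)•y - (B e z)•e) (z - (B x z)•x - (B y z)•y - (B e z)•e)
      = 2 - (B x z)^2 - (B y z)^2 - (B e z)^2 := by
    rw [expand3, hsymm z x, hsymm z y, hsymm z e, hsymm y x, hsymm e x, hsymm e y,
      hx, hy, he, hxy, hxe, hye, hz]; ring
  have hrsq : (B e z)^2 = (B x z)^2 := by rw [hre]; linear_combination (B x z)^2 * hε
  have hkey : 2 * (B x z)^2 + (B y z)^2 ≤ 2 := by
    have h0 := bil_nonneg B hpos (z - (B x z)•x - (B y z)•y - (B e z)•e)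
    rw [hval] at h0; linarith [hrsq]
  by_cases hs0 : B x z = 0
  · -- second unit vector f := z - (B y z) • y, answer c = e + f
    have ht0 : B y z ≠ 0 := fun h => hnz ⟨hs0, h⟩
    have ht1 : B y z * B y z = 1 := by
      have h1 : 1 ≤ |B y z| := Int.one_le_abs ht0
      have h2 : (B y z)^2 ≤ 1 := by
        rw [hs0] at hkey
        have ha : B y z ≤ 1 := by nlinarith [sq_nonneg (B y z - 1)]
        have hb : -1 ≤ B y z := by nlinarith [sq_nonneg (B y z + 1)]
        nlinarith [mul_nonneg (by linarith : (0:ℤ) ≤ 1 - B y z) (by linarith : (0:ℤ) ≤ B y z + 1)]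
      nlinarith [sq_abs (B y z), abs_nonneg (B y z)]
    have hr0 : B e z = 0 := by rw [hre, hs0]; ring
    left
    refine ⟨x, y, e + (z - (B y z)•y), hx, hy, ?_, hxy, ?_, ?_⟩
    · simp [map_add, map_sub, map_smul, LinearMap.add_apply, LinearMap.sub_apply,
        LinearMap.smul_apply, smul_eq_mul, hsymm z y, hsymm z e, hsymm e y, hr0, hye, he, hy, hz]
      linarith [ht1]
    · simp [map_add, map_sub, map_smul, LinearMap.add_apply, LinearMap.sub_apply,
        LinearMap.smul_apply, smul_eq_mul, hxe, hs0, hxy]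
    · simp [map_add, map_sub, map_smul, LinearMap.add_apply, LinearMap.sub_apply,
        LinearMap.smul_apply, smul_eq_mul, hye, hy]
  · right
    have hs1 : (B x z)^2 = 1 := by
      have hge : (1:ℤ) ≤ (B x z)^2 := one_le_sq' _ hs0
      have hle : (B x z)^2 ≤ 1 := by linarith [sq_nonneg (B y z)]
      omega
    have ht1 : B y z = 0 := by
      have : (B y z)^2 ≤ 0 := by linarith
      exact pow_eq_zero_iff (n := 2) (by norm_num) |>.mp (le_antisymm this (sq_nonneg _))
    have hzz : B (z - (B x z)•x - (B y z)•y - (B e z)•e)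
        (z - (B x z)•x - (B y z)•y - (B e z)•e) ≤ 0 := by
      rw [hval]; linarith [hrsq, sq_nonneg (B y z), hs1]
    have h0 := eq_zero_of_bil B hpos _ hzz
    rw [ht1, zero_smul, sub_zero, sub_sub, sub_eq_zero] at h0
    exact ⟨h0, hs1⟩

private lemma aux {Q : Type*} [AddCommGroup Q] [Module ℤ Q] (B : LinearMap.BilinForm ℤ Q)
    (hsymm : ∀ x y : Q, B x y = B y x) (hpos : ∀ x : Q, x ≠ 0 → 0 < B x x)
    (x y e : Q) (hx : B x x = 1) (hy : B y y = 1) (he : B e e = 1)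
    (hxy : B x y = 0) (hxe : B x e = 0) (hye : B y e = 0)
    (ε : ℤ) (hε : ε^2 = 1) (v w : Q) (hv : B v v = 2) (hw : B w w = 2) (hvw : B v w = 0)
    (hvu : B x v * ε + B e v = 0) (hwu : B x w * ε + B e w = 0)
    (hnv : ¬(B x v = 0 ∧ B y v = 0)) (hnw : ¬(B x w = 0 ∧ B y w = 0)) :
    ∃ a b c : Q, B a a = 1 ∧ B b b = 1 ∧ B c c = 2 ∧
      B a b = 0 ∧ B a c = 0 ∧ B b c = 0 := by
  rcases auxz B hsymm hpos x y e hx hy he hxy hxe hye ε hε v hv hvu hnv with h | ⟨hveq, hvs⟩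
  · exact h
  rcases auxz B hsymm hpos x y e hx hy he hxy hxe hye ε hε w hw hwu hnw with h | ⟨hweq, hws⟩
  · exact h
  exfalso
  have hev : B e v = -(ε * B x v) := by linarith
  have hew : B e w = -(ε * B x w) := by linarith
  have h2 : B v w = B ((B x v)•x + (B e v)•e) w := by rw [← hveq]
  rw [hvw, expand_pair, hev, hew] at h2
  have h3 : (0:ℤ) = B x v * B x w + ε^2 * (B x v * B x w) := by linear_combination h2
  rw [hε, one_mul] at h3
  have hab : B x v * B x w = 0 := by linarith
  have : (1:ℤ) = 0 := by
    calc (1:ℤ) = (B x v)^2 * (B x w)^2 := by rw [hvs, hws]; ring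
    _ = (B x v * B x w)^2 := (mul_pow _ _ 2).symm
    _ = 0 := by rw [hab]; ring
  exact absurd this (by norm_num)

private lemma fromB {Q : Type*} [AddCommGroup Q] [Module ℤ Q] (B : LinearMap.BilinForm ℤ Q)
    (hsymm : ∀ x y : Q, B x y = B y x) (hpos : ∀ x : Q, x ≠ 0 → 0 < B x x)
    (x y : Q) (hx : B x x = 1) (hy : B y y = 1) (hxy : B x y = 0)
    (u v w : Q) (hu : B u u = 2) (hv : B v v = 2) (hw : B w w = 2)
    (huv : B u v = 0) (huw : B u w = 0) (hvw : B v w = 0)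
    (hmid : (B x u)^2 + (B y u)^2 = 1)
    (hnv : ¬(B x v = 0 ∧ B y v = 0)) (hnw : ¬(B x w = 0 ∧ B y w = 0)) :
    ∃ a b c : Q, B a a = 1 ∧ B b b = 1 ∧ B c c = 2 ∧
      B a b = 0 ∧ B a c = 0 ∧ B b c = 0 := by
  set e := u - (B x u)•x - (B y u)•y - (0:ℤ)•x with hedef
  have hee : B e e = 1 := by
    rw [hedef, expand3, hsymm u x, hsymm u y, hsymm y x, hx, hy, hxy, hu]
    linear_combination (-1 : ℤ) * hmid
  have hxe : B x e = 0 := by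
    rw [hedef]
    simp [map_sub, map_smul, LinearMap.sub_apply, LinearMap.smul_apply, smul_eq_mul, hx, hxy]
  have hye : B y e = 0 := by
    rw [hedef]
    simp [map_sub, map_smul, LinearMap.sub_apply, LinearMap.smul_apply, smul_eq_mul,
      hsymm y x, hxy, hy]
  have hev : ∀ z : Q, B e z = B u z - (B x u) * (B x z) - (B y u) * (B y z) := by
    intro z
    rw [hedef, expand_sub]
  have hcase : B x u = 0 ∨ B y u = 0 := by
    by_contra hc
    push_neg at hc
    have h1 := one_le_sq' _ hc.1
    have h2 := one_le_sq' _ hc.2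
    linarith
  rcases hcase with hs | ht
  · have hty : (B y u)^2 = 1 := by rw [hs] at hmid; simpa using hmid
    refine aux B hsymm hpos y x e hy hx hee ((hsymm y x).trans hxy) hye hxe (B y u) hty
      v w hv hw hvw ?_ ?_ (fun h => hnv ⟨h.2, h.1⟩) (fun h => hnw ⟨h.2, h.1⟩)
    · rw [hev v, huv, hs]; ring
    · rw [hev w, huw, hs]; ring
  · have hsx : (B x u)^2 = 1 := by rw [ht] at hmid; simpa using hmid
    refine aux B hsymm hpos x y e hx hy hee hxy hxe hye (B x u) hsx
      v w hv hw hvw ?_ ?_ hnv hnw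
    · rw [hev v, huv, ht]; ring
    · rw [hev w, huw, ht]; ring

/-- A positive-definite integral lattice representing ⟨1⟩⊕⟨1⟩ and
⟨2⟩⊕⟨2⟩⊕⟨2⟩ also represents ⟨1⟩⊕⟨1⟩⊕⟨2⟩. -/
theorem represents_112 (Q : Type*) [AddCommGroup Q] [Module ℤ Q]
    [Module.Free ℤ Q] [Module.Finite ℤ Q]
    (B : LinearMap.BilinForm ℤ Q)
    (hsymm : ∀ x y : Q, B x y = B y x)
    (hpos : ∀ x : Q, x ≠ 0 → 0 < B x x)
    (h11 : ∃ x y : Q, B x x = 1 ∧ B y y = 1 ∧ B x y = 0)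
    (h222 : ∃ u v w : Q, B u u = 2 ∧ B v v = 2 ∧ B w w = 2 ∧
      B u v = 0 ∧ B u w = 0 ∧ B v w = 0) :
    ∃ a b c : Q, B a a = 1 ∧ B b b = 1 ∧ B c c = 2 ∧
      B a b = 0 ∧ B a c = 0 ∧ B b c = 0 := by
  obtain ⟨x, y, hx, hy, hxy⟩ := h11
  obtain ⟨u, v, w, hu, hv, hw, huv, huw, hvw⟩ := h222
  have nb1 : ∀ z : Q, (B x z)^2 + (B y z)^2 = 1 → ¬(B x z = 0 ∧ B y z = 0) := by
    intro z h hc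
    rw [hc.1, hc.2] at h
    norm_num at h
  have nb2 : ∀ z : Q, (B x z)^2 = 1 → ¬(B x z = 0 ∧ B y z = 0) := by
    intro z h hc
    rw [hc.1] at h
    norm_num at h
  rcases classify B hsymm hpos x y u hx hy hxy hu with ⟨h1, h2⟩ | hmu | ⟨hequ, hsu, htu⟩
  · exact ⟨x, y, u, hx, hy, hu, hxy, h1, h2⟩
  · rcases classify B hsymm hpos x y v hx hy hxy hv with ⟨h1, h2⟩ | hmv | ⟨heqv, hsv, htv⟩
    · exact ⟨x, y, v, hx, hy, hv, hxy, h1, h2⟩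
    · rcases classify B hsymm hpos x y w hx hy hxy hw with ⟨h1, h2⟩ | hmw | ⟨heqw, hsw, htw⟩
      · exact ⟨x, y, w, hx, hy, hw, hxy, h1, h2⟩
      · exact fromB B hsymm hpos x y hx hy hxy u v w hu hv hw huv huw hvw hmu
          (nb1 v hmv) (nb1 w hmw)
      · exact fromB B hsymm hpos x y hx hy hxy u v w hu hv hw huv huw hvw hmu
          (nb1 v hmv) (nb2 w hsw)
    · rcases classify B hsymm hpos x y w hx hy hxy hw with ⟨h1, h2⟩ | hmw | ⟨heqw, hsw, htw⟩
      · exact ⟨x, y, w, hx, hy, hw, hxy, h1, h2⟩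
      · exact fromB B hsymm hpos x y hx hy hxy u v w hu hv hw huv huw hvw hmu
          (nb2 v hsv) (nb1 w hmw)
      · exact fromB B hsymm hpos x y hx hy hxy u v w hu hv hw huv huw hvw hmu
          (nb2 v hsv) (nb2 w hsw)
  · rcases classify B hsymm hpos x y v hx hy hxy hv with ⟨h1, h2⟩ | hmv | ⟨heqv, hsv, htv⟩
    · exact ⟨x, y, v, hx, hy, hv, hxy, h1, h2⟩
    · rcases classify B hsymm hpos x y w hx hy hxy hw with ⟨h1, h2⟩ | hmw | ⟨heqw, hsw, htw⟩
      · exact ⟨x, y, w, hx, hy, hw, hxy, h1, h2⟩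
      · exact fromB B hsymm hpos x y hx hy hxy v u w hv hu hw ((hsymm v u).trans huv)
          hvw huw hmv (nb2 u hsu) (nb1 w hmw)
      · exact fromB B hsymm hpos x y hx hy hxy v u w hv hu hw ((hsymm v u).trans huv)
          hvw huw hmv (nb2 u hsu) (nb2 w hsw)
    · rcases classify B hsymm hpos x y w hx hy hxy hw with ⟨h1, h2⟩ | hmw | ⟨heqw, hsw, htw⟩
      · exact ⟨x, y, w, hx, hy, hw, hxy, h1, h2⟩
      · exact fromB B hsymm hpos x y hx hy hxy w u v hw hu hv ((hsymm w u).trans huw)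
          ((hsymm w v).trans hvw) huv hmw (nb2 u hsu) (nb2 v hsv)
      · exfalso
        have e1 : B x u * B x v + B y u * B y v = 0 := by
          have h := huv
          rw [hequ, expand_pair] at h
          exact h
        have e2 : B x u * B x w + B y u * B y w = 0 := by
          have h := huw
          rw [hequ, expand_pair] at h
          exact h
        have e3 : B x v * B x w + B y v * B y w = 0 := by
          have h := hvw
          rw [heqv, expand_pair] at h
          exact h
        exact allA _ _ _ _ _ _ hsu htu hsv htv hsw htw e1 e2 e3
end

section
/- Let Q be a positive-definite integral lattice containing sublattices L and L' (as abstract lattices; i.e., Q represents both L and L'). Suppose L' is generated by vectors v₁, ..., vₖ whose norms (vᵢ, vᵢ) are each strictly less than the minimal norm of a nonzero vector of the dual lattice L*. Then the given copy of L' in Q is orthogonal to the given copy of L, so Q represents L ⊕ L'. -/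
/-- Let Q be a positive-definite integral lattice containing sublattices
L and L', where L' is generated by vectors v₁, ..., vₖ whose norms are each strictly
less than the minimal norm of a nonzero vector of the dual lattice
L* = {x ∈ L ⊗ ℚ : (x,w) ∈ ℤ for all w ∈ L}. Then L' is orthogonal to L
(so Q represents L ⊕ L'). -/
theorem small_generators_orthogonal (V : Type*) [AddCommGroup V] [Module ℚ V]
    (B : LinearMap.BilinForm ℚ V)
    (hsymm : ∀ x y : V, B x y = B y x)
    (hpos : ∀ x : V, x ≠ 0 → 0 < B x x)
    (Q L L' : Submodule ℤ V) (hQfg : Q.FG) (hLQ : L ≤ Q) (hL'Q : L' ≤ Q)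
    (hint : ∀ x ∈ Q, ∀ y ∈ Q, ∃ n : ℤ, (n : ℚ) = B x y)
    (k : ℕ) (v : Fin k → V)
    (hgen : L' = Submodule.span ℤ (Set.range v))
    (hsmall : ∀ i : Fin k, ∀ x ∈ Submodule.span ℚ (L : Set V),
      (∀ w ∈ L, ∃ n : ℤ, (n : ℚ) = B x w) → x ≠ 0 → B (v i) (v i) < B x x) :
    ∀ a ∈ L', ∀ b ∈ L, B a b = 0 := by
  -- L is finitely generated over ℤ
  haveI : IsNoetherian ℤ Q := isNoetherian_of_fg_of_noetherian Q hQfg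
  have hLfg : L.FG := by
    have h1 : (L.comap Q.subtype).FG := IsNoetherian.noetherian _
    have h2 : (L.comap Q.subtype).map Q.subtype = L := by
      rw [Submodule.map_comap_subtype, inf_eq_right.mpr hLQ]
    rw [← h2]
    exact h1.map _
  obtain ⟨S, hS⟩ := hLfg
  -- the ℚ-span of L is finite-dimensional
  set W : Submodule ℚ V := Submodule.span ℚ (L : Set V) with hW
  have hWspan : W = Submodule.span ℚ (S : Set V) := by
    rw [hW, ← hS]
    exact (Submodule.span_span_of_tower ℤ ℚ (S : Set V))
  haveI : FiniteDimensional ℚ W := by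
    rw [hWspan]; exact FiniteDimensional.span_of_finite ℚ S.finite_toSet
  -- the restriction of B to W is nondegenerate
  have hrefl : B.IsRefl := fun x y h => by rw [hsymm]; exact h
  have hnd : (B.restrict W).Nondegenerate := by
    refine LinearMap.BilinForm.Nondegenerate.ofSeparatingLeft ?_
    intro x hx
    by_contra hx0
    have : (x : V) ≠ 0 := fun h => hx0 (Subtype.ext h)
    have := hpos (x : V) this
    have h0 : B (x : V) (x : V) = 0 := hx x
    linarith
  -- step 1: each generator v i is orthogonal to all of W
  have key : ∀ i : Fin k, ∀ w ∈ W, B (v i) w = 0 := by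
    intro i
    have hviQ : v i ∈ Q := hL'Q (hgen ▸ Submodule.subset_span ⟨i, rfl⟩)
    -- the functional w ↦ B (v i) w on W
    set φ : Module.Dual ℚ W := (B (v i)).comp W.subtype with hφ
    set x : W := ((B.restrict W).toDual hnd).symm φ with hx
    have hxw : ∀ w : W, B (x : V) (w : V) = B (v i) (w : V) := by
      intro w
      have := LinearMap.BilinForm.apply_toDual_symm_apply (B := B.restrict W) (hB := hnd) φ w
      rw [LinearMap.BilinForm.restrict_apply] at this
      simpa [hφ] using this
    -- x is in the dual lattice condition
    have hxdual : ∀ w' ∈ L, ∃ n : ℤ, (n : ℚ) = B (x : V) w' := by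
      intro w' hw'
      rw [hxw ⟨w', Submodule.subset_span hw'⟩]
      exact hint (v i) hviQ w' (hLQ hw')
    -- x must be zero
    have hx0 : (x : V) = 0 := by
      by_contra hne
      have hlt := hsmall i (x : V) x.2 hxdual hne
      -- but B (v i - x) (v i - x) ≥ 0 gives B x x ≤ B (v i) (v i)
      have hvx : B (v i) (x : V) = B (x : V) (x : V) := (hxw x).symm
      have hxv : B (x : V) (v i) = B (x : V) (x : V) := by rw [hsymm]; exact hvx
      have hexp : B (v i - (x : V)) (v i - (x : V))
          = B (v i) (v i) - B (x : V) (x : V) := by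
        simp only [map_sub, LinearMap.sub_apply, hvx, hxv]
        ring
      rcases eq_or_ne (v i - (x : V)) 0 with h | h
      · have : v i = (x : V) := sub_eq_zero.mp h
        rw [this] at hlt; exact lt_irrefl _ hlt
      · have := hpos _ h
        rw [hexp] at this
        linarith
    intro w hw
    have := hxw ⟨w, hw⟩
    rw [hx0, map_zero, LinearMap.zero_apply] at this
    exact this.symm
  -- step 2: extend to all of L' by span induction
  intro a ha b hb
  have hbW : b ∈ W := Submodule.subset_span hb
  rw [hgen] at ha
  induction ha using Submodule.span_induction with
  | mem x hx => obtain ⟨i, rfl⟩ := hx; exact key i b hbW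
  | zero => simp
  | add x y _ _ hx hy => rw [map_add, LinearMap.add_apply, hx, hy, add_zero]
  | smul n x _ hx =>
      rw [map_zsmul, LinearMap.smul_apply, hx, smul_zero]
end

section
/- Let L be a positive-definite lattice whose dual lattice L* has minimal nonzero norm strictly greater than 1, and let n ≥ 1. If a positive-definite integral lattice Q represents both L and ℤⁿ (the standard cubic lattice), then Q represents L ⊕ ℤⁿ. -/
private lemma exists_zsmul_mem_span {V : Type*} [AddCommGroup V] [Module ℚ V] (t : Set V)
    (x : V) (hx : x ∈ Submodule.span ℚ t) :
    ∃ N : ℤ, 0 < N ∧ N • x ∈ Submodule.span ℤ t := by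
  induction hx using Submodule.span_induction with
  | mem z hz => exact ⟨1, one_pos, by simpa using Submodule.subset_span hz⟩
  | zero => exact ⟨1, one_pos, by simp⟩
  | add x y hx hy ihx ihy =>
      obtain ⟨N, hN, hNx⟩ := ihx
      obtain ⟨M, hM, hMy⟩ := ihy
      refine ⟨N * M, mul_pos hN hM, ?_⟩
      have : (N * M) • (x + y) = M • (N • x) + N • (M • y) := by
        rw [smul_add, smul_smul, smul_smul, mul_comm M N]
      rw [this]
      exact Submodule.add_mem _ (Submodule.smul_mem _ _ hNx) (Submodule.smul_mem _ _ hMy)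
  | smul q x hx ih =>
      obtain ⟨N, hN, hNx⟩ := ih
      refine ⟨(q.den : ℤ) * N, mul_pos (by exact_mod_cast q.den_pos) hN, ?_⟩
      have key : ((q.den : ℤ) * N) • (q • x) = q.num • (N • x) := by
        rw [smul_smul, ← Int.cast_smul_eq_zsmul ℚ, ← Int.cast_smul_eq_zsmul ℚ (q.num * N),
          smul_smul]
        congr 1
        push_cast
        rw [mul_comm ((q.den : ℚ)) (N : ℚ), mul_assoc, mul_comm ((q.den : ℚ)) q,
          Rat.mul_den_eq_num, mul_comm]
      rw [key]
      exact Submodule.smul_mem _ _ hNx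

private lemma bq_nonneg {Q : Type*} [AddCommGroup Q] [Module ℤ Q]
    (BQ : LinearMap.BilinForm ℤ Q) (hpos : ∀ x : Q, x ≠ 0 → 0 < BQ x x) (z : Q) :
    0 ≤ BQ z z := by
  rcases eq_or_ne z 0 with h | h
  · simp [h]
  · exact (hpos z h).le

private lemma cs_unit {Q : Type*} [AddCommGroup Q] [Module ℤ Q]
    (BQ : LinearMap.BilinForm ℤ Q)
    (hsymm : ∀ x y : Q, BQ x y = BQ y x)
    (hpos : ∀ x : Q, x ≠ 0 → 0 < BQ x x)
    (e u : Q) (he : BQ e e = 1) : BQ u e * BQ u e ≤ BQ u u := by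
  have h := bq_nonneg BQ hpos (u - BQ u e • e)
  have expand : BQ (u - BQ u e • e) (u - BQ u e • e)
      = BQ u u - BQ u e * BQ e u - BQ u e * BQ u e + BQ u e * BQ u e * BQ e e := by
    simp only [map_sub, LinearMap.sub_apply]
    simp
    ring
  rw [expand, he, hsymm e u] at h
  linarith

/-- Let L be a positive-definite lattice (a finitely generated
ℤ-submodule of a ℚ-vector space with positive-definite symmetric form) whose dual
lattice L* has minimal nonzero norm strictly greater than 1, and let n ≥ 1. If a
positive-definite integral lattice Q represents both L and ℤⁿ, then Q represents
the orthogonal direct sum L ⊕ ℤⁿ. -/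
theorem represents_L_oplus_Zn (V : Type*) [AddCommGroup V] [Module ℚ V]
    (B : LinearMap.BilinForm ℚ V)
    (hsymmV : ∀ x y : V, B x y = B y x)
    (hposV : ∀ x : V, x ≠ 0 → 0 < B x x)
    (L : Submodule ℤ V) (hLfg : L.FG)
    (hdual : ∀ x ∈ Submodule.span ℚ (L : Set V),
      (∀ w ∈ L, ∃ m : ℤ, (m : ℚ) = B x w) → x ≠ 0 → 1 < B x x)
    (n : ℕ) (hn : 1 ≤ n)
    (Q : Type*) [AddCommGroup Q] [Module ℤ Q] [Module.Free ℤ Q] [Module.Finite ℤ Q]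
    (BQ : LinearMap.BilinForm ℤ Q)
    (hsymm : ∀ x y : Q, BQ x y = BQ y x)
    (hpos : ∀ x : Q, x ≠ 0 → 0 < BQ x x)
    (hrepL : ∃ f : L →ₗ[ℤ] Q, Function.Injective f ∧
      ∀ x y : L, ((BQ (f x) (f y) : ℤ) : ℚ) = B (x : V) (y : V))
    (hrepZn : ∃ g : (Fin n → ℤ) →ₗ[ℤ] Q, Function.Injective g ∧
      ∀ a b : Fin n → ℤ, BQ (g a) (g b) = dotProduct a b) :
    ∃ φ : (L × (Fin n → ℤ)) →ₗ[ℤ] Q, Function.Injective φ ∧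
      ∀ p q : L × (Fin n → ℤ),
        ((BQ (φ p) (φ q) : ℤ) : ℚ) = B (p.1 : V) (q.1 : V) + ((dotProduct p.2 q.2 : ℤ) : ℚ) := by
  obtain ⟨f, hfinj, hf⟩ := hrepL
  obtain ⟨g, hginj, hg⟩ := hrepZn
  set W : Submodule ℚ V := Submodule.span ℚ (L : Set V) with hWdef
  obtain ⟨s, hs⟩ := hLfg
  have hWs : Submodule.span ℚ (s : Set V) = W := by
    rw [hWdef, ← hs]
    exact (Submodule.span_span_of_tower ℤ ℚ (s : Set V)).symm
  have hWfd : FiniteDimensional ℚ W := by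
    rw [← hWs]; infer_instance
  have hLW : ∀ x : L, (x : V) ∈ W := fun x => Submodule.subset_span x.2
  let incl : L →ₗ[ℤ] W :=
    { toFun := fun x => ⟨(x : V), hLW x⟩
      map_add' := fun x y => by ext; simp
      map_smul' := fun m x => by ext; simp }
  let BW : LinearMap.BilinForm ℚ W := B.restrict W
  have hBW : ∀ u w : W, BW u w = B (u : V) (w : V) := fun u w => rfl
  have hBWnd : BW.Nondegenerate := by
    refine LinearMap.BilinForm.Nondegenerate.ofSeparatingLeft ?_
    intro u hu
    by_contra hu0
    have h1 := hposV (u : V) (by simpa using hu0)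
    have h2 := hu u
    rw [hBW] at h2
    rw [h2] at h1
    exact lt_irrefl _ h1
  -- key orthogonality
  have key : ∀ e : Q, BQ e e = 1 → ∀ x : L, BQ (f x) e = 0 := by
    intro e he
    let ℓ : L →ₗ[ℤ] ℤ := (BQ.flip e).comp f
    have hℓ : ∀ x : L, ℓ x = BQ (f x) e := fun x => rfl
    obtain ⟨t, hts, htspan, htli⟩ := exists_linearIndependent ℚ (s : Set V)
    have htW : Submodule.span ℚ (Set.range ((↑) : t → V)) = W := by
      rw [Subtype.range_coe, htspan, hWs]
    let b : Module.Basis t ℚ W := (Module.Basis.span htli).map (LinearEquiv.ofEq _ _ htW)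
    have hbv : ∀ i : t, ((b i : W) : V) = (i : V) := by
      intro i
      show ((LinearEquiv.ofEq _ _ htW) (Module.Basis.span htli i) : V) = _
      rw [show ((LinearEquiv.ofEq _ _ htW) (Module.Basis.span htli i) : V)
          = ((Module.Basis.span htli i : Submodule.span ℚ (Set.range ((↑) : t → V))) : V) from rfl]
      exact congrArg Subtype.val (Module.Basis.span_apply htli i)
    have htL : ∀ z ∈ t, z ∈ L := by
      intro z hz
      rw [← hs]
      exact Submodule.subset_span (hts hz)
    let ℓhat : Module.Dual ℚ W := b.constr ℚ (fun i => (ℓ ⟨(i : V), htL i i.2⟩ : ℚ))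
    -- agreement of ℓhat with ℓ on L
    let D : L →ₗ[ℤ] ℚ :=
      (ℓhat.restrictScalars ℤ).comp incl - (Int.castAddHom ℚ).toIntLinearMap.comp ℓ
    have hD : ∀ x : L, D x = ℓhat (incl x) - (ℓ x : ℚ) := fun x => rfl
    have hDt : ∀ (z : L), (z : V) ∈ t → D z = 0 := by
      intro z hz
      have h1 : incl z = b ⟨(z : V), hz⟩ := by
        apply Subtype.ext
        rw [hbv ⟨(z : V), hz⟩]
        rfl
      rw [hD, h1]
      have h2 : ℓhat (b ⟨(z : V), hz⟩) = (ℓ ⟨(z : V), htL z hz⟩ : ℚ) :=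
        Module.Basis.constr_basis b ℚ _ _
      rw [h2]
      have h3 : (⟨(z : V), htL z hz⟩ : L) = z := Subtype.ext rfl
      rw [h3, sub_self]
    have hagree : ∀ x : L, ℓhat (incl x) = (ℓ x : ℚ) := by
      intro x
      have hxt : (x : V) ∈ Submodule.span ℚ t := by
        rw [htspan, hWs]; exact hLW x
      obtain ⟨N, hN, hNx⟩ := exists_zsmul_mem_span t (x : V) hxt
      -- N • x ∈ span ℤ t, and span ℤ t pulled back into L kills D
      have htL' : t ⊆ Set.range ((↑) : L → V) := by
        intro z hz; exact ⟨⟨z, htL z hz⟩, rfl⟩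
      have hmap : Submodule.span ℤ t
          = Submodule.map L.subtype (Submodule.span ℤ (((↑) : L → V) ⁻¹' t)) := by
        rw [Submodule.map_span]
        congr 1
        exact (Set.image_preimage_eq_of_subset htL').symm
      rw [hmap] at hNx
      obtain ⟨y, hy, hyx⟩ := Submodule.mem_map.mp hNx
      have hyNx : y = N • x := by
        apply Subtype.ext
        simpa using hyx
      have hker : Submodule.span ℤ (((↑) : L → V) ⁻¹' t) ≤ LinearMap.ker D := by
        rw [Submodule.span_le]
        intro z hz
        exact LinearMap.mem_ker.mpr (hDt z hz)
      have hDy : D y = 0 := hker hy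
      rw [hyNx, map_smul] at hDy
      have : D x = 0 := by
        have hN0 : (N : ℚ) ≠ 0 := Int.cast_ne_zero.mpr hN.ne'
        rcases smul_eq_zero.mp hDy with h | h
        · exact absurd h hN.ne'
        · exact h
      have := hD x ▸ this
      linarith [this]
    -- the dual vector
    let v : W := ((BW.toDual hBWnd).symm ℓhat)
    have hv : ∀ w : W, BW v w = ℓhat w := fun w =>
      LinearMap.BilinForm.apply_toDual_symm_apply ℓhat w
    have hvB : ∀ x : L, B (v : V) (x : V) = (ℓ x : ℚ) := by
      intro x
      rw [← hagree x, ← hv (incl x)]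
      rfl
    have hv0 : v = 0 := by
      by_contra hvne
      have hvV : (v : V) ≠ 0 := fun h => hvne (Subtype.ext h)
      have hgt : 1 < B (v : V) (v : V) :=
        hdual (v : V) v.2 (fun w hw => ⟨ℓ ⟨w, hw⟩, (hvB ⟨w, hw⟩).symm⟩) hvV
      have hc : 0 < B (v : V) (v : V) := hposV _ hvV
      obtain ⟨M, hM, hMv⟩ := exists_zsmul_mem_span (L : Set V) (v : V) v.2
      rw [Submodule.span_eq] at hMv
      set x0 : L := ⟨M • (v : V), hMv⟩ with hx0
      have h1 : (ℓ x0 : ℚ) = (M : ℚ) * B (v : V) (v : V) := by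
        rw [← hvB x0]
        show B (v : V) (M • (v : V)) = _
        rw [← Int.cast_smul_eq_zsmul ℚ, map_smul, smul_eq_mul]
      have h2 : B (x0 : V) (x0 : V) = (M : ℚ) * ((M : ℚ) * B (v : V) (v : V)) := by
        show B (M • (v : V)) (M • (v : V)) = _
        rw [← Int.cast_smul_eq_zsmul ℚ, map_smul, map_smul, LinearMap.smul_apply,
          smul_eq_mul, smul_eq_mul]
      have hcs : (ℓ x0) * (ℓ x0) ≤ BQ (f x0) (f x0) := by
        rw [hℓ]; exact cs_unit BQ hsymm hpos e (f x0) he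
      have hcsq : (ℓ x0 : ℚ) * (ℓ x0 : ℚ) ≤ B (x0 : V) (x0 : V) := by
        rw [← hf x0 x0]
        exact_mod_cast hcs
      rw [h1, h2] at hcsq
      have hM0 : (0 : ℚ) < (M : ℚ) := by exact_mod_cast hM
      nlinarith [mul_pos (mul_pos hM0 hM0) hc, mul_lt_mul_of_pos_left hgt (mul_pos (mul_pos hM0 hM0) hc)]
    have hlhat : ℓhat = 0 := by
      have h := (BW.toDual hBWnd).apply_symm_apply ℓhat
      rw [show ((BW.toDual hBWnd).symm ℓhat) = v from rfl, hv0, map_zero] at h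
      exact h.symm
    intro x
    have h := hagree x
    rw [hlhat] at h
    simp only [LinearMap.zero_apply] at h
    have : (ℓ x : ℚ) = 0 := h.symm
    have hz : ℓ x = 0 := by exact_mod_cast this
    rw [← hℓ]; exact hz
  -- orthogonality of images
  have horth : ∀ (x : L) (a : Fin n → ℤ), BQ (f x) (g a) = 0 := by
    intro x a
    have hunit : ∀ i : Fin n, BQ (g (Pi.single i 1)) (g (Pi.single i 1)) = 1 := by
      intro i
      rw [hg]
      simp [dotProduct, Pi.single_apply]
    have hi : ∀ i : Fin n, BQ (f x) (g (Pi.single i 1)) = 0 := fun i => key _ (hunit i) x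
    have ha : a = ∑ i, a i • Pi.single i 1 := by
      funext j
      simp [Finset.sum_apply, Pi.single_apply]
    calc BQ (f x) (g a) = BQ (f x) (g (∑ i, a i • Pi.single i 1)) := by rw [← ha]
      _ = ∑ i, a i • BQ (f x) (g (Pi.single i 1)) := by
          rw [map_sum, map_sum]
          exact Finset.sum_congr rfl fun i _ => by rw [LinearMap.map_smul, LinearMap.map_smul]
      _ = 0 := by simp [hi]
  -- the embedding
  refine ⟨f.comp (LinearMap.fst ℤ L (Fin n → ℤ)) + g.comp (LinearMap.snd ℤ L (Fin n → ℤ)),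
    ?_, ?_⟩
  case refine_2 =>
    intro p q
    show ((BQ (f p.1 + g p.2) (f q.1 + g q.2) : ℤ) : ℚ) = _
    have expand : BQ (f p.1 + g p.2) (f q.1 + g q.2)
        = BQ (f p.1) (f q.1) + dotProduct p.2 q.2 := by
      simp only [map_add, LinearMap.add_apply]
      rw [horth p.1 q.2, hsymm (g p.2) (f q.1), horth q.1 p.2, hg]
      ring
    rw [expand]
    push_cast
    rw [hf]
  case refine_1 =>
    set φ := f.comp (LinearMap.fst ℤ L (Fin n → ℤ)) + g.comp (LinearMap.snd ℤ L (Fin n → ℤ))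
      with hφ
    have hker : ∀ p : L × (Fin n → ℤ), φ p = 0 → p = 0 := by
      intro p hp
      have h0 : BQ (φ p) (φ p) = 0 := by rw [hp]; simp
      have hexp : BQ (φ p) (φ p) = BQ (f p.1) (f p.1) + dotProduct p.2 p.2 := by
        show BQ (f p.1 + g p.2) (f p.1 + g p.2) = _
        simp only [map_add, LinearMap.add_apply]
        rw [horth p.1 p.2, hsymm (g p.2) (f p.1), horth p.1 p.2, hg]
        ring
      rw [hexp] at h0
      have hd : 0 ≤ dotProduct p.2 p.2 := by
        rw [dotProduct]
        exact Finset.sum_nonneg fun i _ => mul_self_nonneg _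
      have hb : 0 ≤ BQ (f p.1) (f p.1) := bq_nonneg BQ hpos _
      have h1 : BQ (f p.1) (f p.1) = 0 := by linarith
      have h2 : dotProduct p.2 p.2 = 0 := by linarith
      have hp2 : p.2 = 0 := dotProduct_self_eq_zero.mp h2
      have hp1 : p.1 = 0 := by
        have hBx : B (p.1 : V) (p.1 : V) = 0 := by
          rw [← hf p.1 p.1, h1]; simp
        by_contra hne
        have hxV : (p.1 : V) ≠ 0 := by
          intro h
          exact hne (Subtype.ext h)
        have := hposV _ hxV
        rw [hBx] at this
        exact lt_irrefl _ this
      exact Prod.ext hp1 hp2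
    intro p q hpq
    have : φ (p - q) = 0 := by rw [map_sub, hpq, sub_self]
    have := hker _ this
    exact sub_eq_zero.mp this
end

section
/- Every positive-definite integral lattice Q that represents both ⟨1⟩ ⊕ ⟨1⟩ and ⟨2⟩ ⊕ ⟨2⟩ ⊕ ⟨2⟩ represents every lattice represented by ⟨1⟩ ⊕ ⟨1⟩ ⊕ ⟨2⟩. (That is, {⟨1⟩⊕⟨1⟩, ⟨2⟩⊕⟨2⟩⊕⟨2⟩} is a criterion set for the set of lattices represented by ⟨1⟩⊕⟨1⟩⊕⟨2⟩.) -/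
set_option maxHeartbeats 1000000

/-- `Q` (with form `BQ`) represents `L` (with form `BL`): there is an injective
ℤ-linear map preserving the bilinear forms. -/
def Represents {L Q : Type*} [AddCommGroup L] [Module ℤ L] [AddCommGroup Q] [Module ℤ Q]
    (BL : LinearMap.BilinForm ℤ L) (BQ : LinearMap.BilinForm ℤ Q) : Prop :=
  ∃ f : L →ₗ[ℤ] Q, Function.Injective f ∧ ∀ x y : L, BQ (f x) (f y) = BL x y

/-- The form ⟨1⟩ ⊕ ⟨1⟩ ⊕ ⟨2⟩. -/
noncomputable def formA : LinearMap.BilinForm ℤ (Fin 3 → ℤ) :=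
  Matrix.toBilin' (Matrix.diagonal ![1, 1, 2])

/-- The form ⟨1⟩ ⊕ ⟨1⟩. -/
noncomputable def formB : LinearMap.BilinForm ℤ (Fin 2 → ℤ) :=
  Matrix.toBilin' (Matrix.diagonal ![1, 1])

/-- The form ⟨2⟩ ⊕ ⟨2⟩ ⊕ ⟨2⟩. -/
noncomputable def formC : LinearMap.BilinForm ℤ (Fin 3 → ℤ) :=
  Matrix.toBilin' (Matrix.diagonal ![2, 2, 2])

lemma formA_apply (x y : Fin 3 → ℤ) :
    formA x y = x 0 * y 0 + x 1 * y 1 + 2 * (x 2 * y 2) := by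
  simp [formA, Matrix.toBilin'_apply', Matrix.mulVec, Matrix.diagonal, Fin.sum_univ_succ, dotProduct]
  try ring

lemma formB_apply (x y : Fin 2 → ℤ) :
    formB x y = x 0 * y 0 + x 1 * y 1 := by
  simp [formB, Matrix.toBilin'_apply', Matrix.mulVec, Matrix.diagonal, Fin.sum_univ_succ, dotProduct]
  try ring

lemma formC_apply (x y : Fin 3 → ℤ) :
    formC x y = 2 * (x 0 * y 0) + 2 * (x 1 * y 1) + 2 * (x 2 * y 2) := by
  simp [formC, Matrix.toBilin'_apply', Matrix.mulVec, Matrix.diagonal, Fin.sum_univ_succ, dotProduct]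
  try ring

set_option maxHeartbeats 4000000 in
lemma aux_arith (a1 b1 a2 b2 a3 b3 n1 n2 n3 c12 c13 c23 : ℤ)
    (hn1 : n1 = 2 - a1^2 - b1^2) (hn2 : n2 = 2 - a2^2 - b2^2) (hn3 : n3 = 2 - a3^2 - b3^2)
    (hc12 : c12 = -(a1*a2 + b1*b2)) (hc13 : c13 = -(a1*a3 + b1*b3))
    (hc23 : c23 = -(a2*a3 + b2*b3))
    (hnn1 : 0 ≤ n1) (hnn2 : 0 ≤ n2) (hnn3 : 0 ≤ n3)
    (hz1 : n1 = 0 → c12 = 0 ∧ c13 = 0) (hz2 : n2 = 0 → c12 = 0 ∧ c23 = 0)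
    (hz3 : n3 = 0 → c13 = 0 ∧ c23 = 0)
    (hpsd : ∀ t1 t2 t3 : ℤ,
      0 ≤ t1^2*n1 + t2^2*n2 + t3^2*n3 + 2*(t1*t2*c12 + t1*t3*c13 + t2*t3*c23)) :
    (a1 = 0 ∧ b1 = 0) ∨ (a2 = 0 ∧ b2 = 0) ∨ (a3 = 0 ∧ b3 = 0) ∨
    (b1 = 0 ∧ b2^2 = 1) ∨ (b2 = 0 ∧ b1^2 = 1) ∨ (b1 = 0 ∧ b3^2 = 1) ∨
    (b3 = 0 ∧ b1^2 = 1) ∨ (b2 = 0 ∧ b3^2 = 1) ∨ (b3 = 0 ∧ b2^2 = 1) := by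
  subst hn1 hn2 hn3 hc12 hc13 hc23
  have H1 := hpsd a1 a2 a3
  have H2 := hpsd b1 b2 b3
  clear hpsd
  have ha1l : -1 ≤ a1 := by nlinarith [sq_nonneg b1]
  have ha1u : a1 ≤ 1 := by nlinarith [sq_nonneg b1]
  have hb1l : -1 ≤ b1 := by nlinarith [sq_nonneg a1]
  have hb1u : b1 ≤ 1 := by nlinarith [sq_nonneg a1]
  have ha2l : -1 ≤ a2 := by nlinarith [sq_nonneg b2]
  have ha2u : a2 ≤ 1 := by nlinarith [sq_nonneg b2]
  have hb2l : -1 ≤ b2 := by nlinarith [sq_nonneg a2]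
  have hb2u : b2 ≤ 1 := by nlinarith [sq_nonneg a2]
  have ha3l : -1 ≤ a3 := by nlinarith [sq_nonneg b3]
  have ha3u : a3 ≤ 1 := by nlinarith [sq_nonneg b3]
  have hb3l : -1 ≤ b3 := by nlinarith [sq_nonneg a3]
  have hb3u : b3 ≤ 1 := by nlinarith [sq_nonneg a3]
  clear hnn1 hnn2 hnn3
  simp only [pow_two] at *
  interval_cases a1 <;> interval_cases b1 <;> interval_cases a2 <;> interval_cases b2 <;>
    interval_cases a3 <;> interval_cases b3 <;> omega

section Latt
variable {Q : Type*} [AddCommGroup Q] [Module ℤ Q] (B : LinearMap.BilinForm ℤ Q)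

lemma Bsmul_left (a : ℤ) (x y : Q) : B (a • x) y = a * B x y := by
  rw [← Int.cast_smul_eq_zsmul ℤ a x, Int.cast_id]
  exact LinearMap.BilinForm.smul_left a x y

lemma Bsmul_right (a : ℤ) (x y : Q) : B x (a • y) = a * B x y := by
  rw [← Int.cast_smul_eq_zsmul ℤ a y, Int.cast_id]
  exact LinearMap.BilinForm.smul_right a x y

lemma gram_sub (hs : ∀ x y : Q, B x y = B y x) (e1 e2 f f' : Q)
    (h11 : B e1 e1 = 1) (h22 : B e2 e2 = 1) (h12 : B e1 e2 = 0) :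
    B (f - B e1 f • e1 - B e2 f • e2) (f' - B e1 f' • e1 - B e2 f' • e2)
      = B f f' - B e1 f * B e1 f' - B e2 f * B e2 f' := by
  simp only [map_sub, LinearMap.sub_apply, Bsmul_left, Bsmul_right,
    h11, h22, h12, hs f e1, hs f e2, hs e2 e1]
  ring

lemma gram_add3 (hs : ∀ x y : Q, B x y = B y x) (g1 g2 g3 : Q) (t1 t2 t3 : ℤ) :
    B (t1 • g1 + t2 • g2 + t3 • g3) (t1 • g1 + t2 • g2 + t3 • g3)
      = t1^2 * B g1 g1 + t2^2 * B g2 g2 + t3^2 * B g3 g3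
        + 2*(t1*t2 * B g1 g2 + t1*t3 * B g1 g3 + t2*t3 * B g2 g3) := by
  simp only [map_add, LinearMap.add_apply, Bsmul_left, Bsmul_right,
    hs g2 g1, hs g3 g1, hs g3 g2]
  ring

lemma mixed (hs : ∀ x y : Q, B x y = B y x) (e2 fi fj : Q)
    (h22 : B e2 e2 = 1) (hfii : B fi fi = 2) (hfjj : B fj fj = 2)
    (horth : B fi fj = 0) (hbi : B e2 fi = 0) (hbj : (B e2 fj)^2 = 1) :
    ∃ x y z : Q, B x x = 1 ∧ B y y = 1 ∧ B z z = 2 ∧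
      B x y = 0 ∧ B x z = 0 ∧ B y z = 0 := by
  refine ⟨fj - B e2 fj • e2, e2, fi, ?_, h22, hfii, ?_, ?_, hbi⟩
  · have h : B (fj - B e2 fj • e2) (fj - B e2 fj • e2) = 2 - (B e2 fj)^2 := by
      simp only [map_sub, LinearMap.sub_apply, Bsmul_left, Bsmul_right,
        h22, hfjj, hs fj e2]
      ring
    rw [h, hbj]; norm_num
  · simp only [map_sub, LinearMap.sub_apply, Bsmul_left, Bsmul_right, h22, hs fj e2]
    ring
  · simp only [map_sub, LinearMap.sub_apply, Bsmul_left, Bsmul_right, hbi, hs fj fi, horth]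
    ring

lemma key (hs : ∀ x y : Q, B x y = B y x) (hpos : ∀ x : Q, x ≠ 0 → 0 < B x x)
    (e1 e2 f1 f2 f3 : Q)
    (h11 : B e1 e1 = 1) (h22 : B e2 e2 = 1) (h12 : B e1 e2 = 0)
    (q1 : B f1 f1 = 2) (q2 : B f2 f2 = 2) (q3 : B f3 f3 = 2)
    (o12 : B f1 f2 = 0) (o13 : B f1 f3 = 0) (o23 : B f2 f3 = 0) :
    ∃ x y z : Q, B x x = 1 ∧ B y y = 1 ∧ B z z = 2 ∧
      B x y = 0 ∧ B x z = 0 ∧ B y z = 0 := by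
  have nonneg : ∀ v : Q, 0 ≤ B v v := by
    intro v
    by_cases h : v = 0
    · simp [h]
    · exact (hpos v h).le
  set g1 := f1 - B e1 f1 • e1 - B e2 f1 • e2 with hg1
  set g2 := f2 - B e1 f2 • e1 - B e2 f2 • e2 with hg2
  set g3 := f3 - B e1 f3 • e1 - B e2 f3 • e2 with hg3
  have ng1 : B g1 g1 = 2 - (B e1 f1)^2 - (B e2 f1)^2 := by
    rw [hg1, gram_sub B hs e1 e2 f1 f1 h11 h22 h12, q1]; ring
  have ng2 : B g2 g2 = 2 - (B e1 f2)^2 - (B e2 f2)^2 := by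
    rw [hg2, gram_sub B hs e1 e2 f2 f2 h11 h22 h12, q2]; ring
  have ng3 : B g3 g3 = 2 - (B e1 f3)^2 - (B e2 f3)^2 := by
    rw [hg3, gram_sub B hs e1 e2 f3 f3 h11 h22 h12, q3]; ring
  have cg12 : B g1 g2 = -(B e1 f1 * B e1 f2 + B e2 f1 * B e2 f2) := by
    rw [hg1, hg2, gram_sub B hs e1 e2 f1 f2 h11 h22 h12, o12]; ring
  have cg13 : B g1 g3 = -(B e1 f1 * B e1 f3 + B e2 f1 * B e2 f3) := by
    rw [hg1, hg3, gram_sub B hs e1 e2 f1 f3 h11 h22 h12, o13]; ring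
  have cg23 : B g2 g3 = -(B e1 f2 * B e1 f3 + B e2 f2 * B e2 f3) := by
    rw [hg2, hg3, gram_sub B hs e1 e2 f2 f3 h11 h22 h12, o23]; ring
  have zero_of : ∀ v : Q, B v v = 0 → v = 0 := by
    intro v hv
    by_contra hne
    exact absurd hv (hpos v hne).ne'
  have hz1 : B g1 g1 = 0 → B g1 g2 = 0 ∧ B g1 g3 = 0 := by
    intro h; rw [zero_of g1 h]; simp
  have hz2 : B g2 g2 = 0 → B g1 g2 = 0 ∧ B g2 g3 = 0 := by
    intro h; rw [zero_of g2 h]; simp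
  have hz3 : B g3 g3 = 0 → B g1 g3 = 0 ∧ B g2 g3 = 0 := by
    intro h; rw [zero_of g3 h]; simp
  have hpsd : ∀ t1 t2 t3 : ℤ,
      0 ≤ t1^2 * B g1 g1 + t2^2 * B g2 g2 + t3^2 * B g3 g3
        + 2*(t1*t2 * B g1 g2 + t1*t3 * B g1 g3 + t2*t3 * B g2 g3) := by
    intro t1 t2 t3
    have h := nonneg (t1 • g1 + t2 • g2 + t3 • g3)
    rwa [gram_add3 B hs] at h
  rcases aux_arith (B e1 f1) (B e2 f1) (B e1 f2) (B e2 f2) (B e1 f3) (B e2 f3)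
      (B g1 g1) (B g2 g2) (B g3 g3) (B g1 g2) (B g1 g3) (B g2 g3)
      ng1 ng2 ng3 cg12 cg13 cg23 (nonneg g1) (nonneg g2) (nonneg g3)
      hz1 hz2 hz3 hpsd with
    (⟨u, v⟩ | ⟨u, v⟩ | ⟨u, v⟩ | ⟨u, v⟩ | ⟨u, v⟩ | ⟨u, v⟩ | ⟨u, v⟩ | ⟨u, v⟩ | ⟨u, v⟩)
  · exact ⟨e1, e2, f1, h11, h22, q1, h12, u, v⟩
  · exact ⟨e1, e2, f2, h11, h22, q2, h12, u, v⟩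
  · exact ⟨e1, e2, f3, h11, h22, q3, h12, u, v⟩
  · exact mixed B hs e2 f1 f2 h22 q1 q2 o12 u v
  · exact mixed B hs e2 f2 f1 h22 q2 q1 ((hs f2 f1).trans o12) u v
  · exact mixed B hs e2 f1 f3 h22 q1 q3 o13 u v
  · exact mixed B hs e2 f3 f1 h22 q3 q1 ((hs f3 f1).trans o13) u v
  · exact mixed B hs e2 f2 f3 h22 q2 q3 o23 u v
  · exact mixed B hs e2 f3 f2 h22 q3 q2 ((hs f3 f2).trans o23) u v

lemma reprA_of_triple (hs : ∀ x y : Q, B x y = B y x) (x y z : Q)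
    (hxx : B x x = 1) (hyy : B y y = 1) (hzz : B z z = 2)
    (hxy : B x y = 0) (hxz : B x z = 0) (hyz : B y z = 0) :
    Represents formA B := by
  set F : (Fin 3 → ℤ) →ₗ[ℤ] Q :=
    (@LinearMap.smulRight ℤ ℤ Q (Fin 3 → ℤ) _ _ _ _ _ _ _ ‹Module ℤ Q› (@IsScalarTower.left ℤ Q _ Module.toDistribMulAction.toMulAction) (LinearMap.proj 0 : (Fin 3 → ℤ) →ₗ[ℤ] ℤ) x)
    + (@LinearMap.smulRight ℤ ℤ Q (Fin 3 → ℤ) _ _ _ _ _ _ _ ‹Module ℤ Q› (@IsScalarTower.left ℤ Q _ Module.toDistribMulAction.toMulAction) (LinearMap.proj 1 : (Fin 3 → ℤ) →ₗ[ℤ] ℤ) y)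
    + (@LinearMap.smulRight ℤ ℤ Q (Fin 3 → ℤ) _ _ _ _ _ _ _ ‹Module ℤ Q› (@IsScalarTower.left ℤ Q _ Module.toDistribMulAction.toMulAction) (LinearMap.proj 2 : (Fin 3 → ℤ) →ₗ[ℤ] ℤ) z) with hF
  have hpres : ∀ u v : Fin 3 → ℤ, B (F u) (F v) = formA u v := by
    intro u v
    rw [formA_apply]
    simp only [hF, LinearMap.add_apply, LinearMap.smulRight_apply, LinearMap.proj_apply,
      map_add, LinearMap.BilinForm.smul_left, LinearMap.BilinForm.smul_right,
      hxx, hyy, hzz, hxy, hxz, hyz, hs y x, hs z x, hs z y]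
    ring
  refine ⟨F, ?_, hpres⟩
  intro u v huv
  have h0 : F (u - v) = 0 := by rw [map_sub, huv, sub_self]
  have c0 : B x (F (u - v)) = (u - v) 0 := by
    simp only [hF, LinearMap.add_apply, LinearMap.smulRight_apply, LinearMap.proj_apply,
      map_add, LinearMap.BilinForm.smul_right, hxx, hxy, hxz]
    ring
  have c1 : B y (F (u - v)) = (u - v) 1 := by
    simp only [hF, LinearMap.add_apply, LinearMap.smulRight_apply, LinearMap.proj_apply,
      map_add, LinearMap.BilinForm.smul_right, hyy, hyz, hs y x, hxy]
    ring
  have c2 : B z (F (u - v)) = 2 * (u - v) 2 := by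
    simp only [hF, LinearMap.add_apply, LinearMap.smulRight_apply, LinearMap.proj_apply,
      map_add, LinearMap.BilinForm.smul_right, hzz, hs z x, hs z y, hxz, hyz]
    ring
  rw [h0, map_zero] at c0 c1 c2
  have e0 : (u - v) 0 = 0 := c0.symm
  have e1 : (u - v) 1 = 0 := c1.symm
  have e2 : (u - v) 2 = 0 := by omega
  have : u - v = 0 := by
    funext i
    fin_cases i
    · exact e0
    · exact e1
    · exact e2
  exact sub_eq_zero.mp this

end Latt

/-- {⟨1⟩⊕⟨1⟩, ⟨2⟩⊕⟨2⟩⊕⟨2⟩} is a criterion set for the set of lattices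
represented by ⟨1⟩⊕⟨1⟩⊕⟨2⟩: any positive-definite integral lattice representing both
⟨1⟩⊕⟨1⟩ and ⟨2⟩⊕⟨2⟩⊕⟨2⟩ represents every lattice represented by ⟨1⟩⊕⟨1⟩⊕⟨2⟩. -/
theorem BC_criterion_set (Q : Type) [AddCommGroup Q] [Module ℤ Q]
    [Module.Free ℤ Q] [Module.Finite ℤ Q]
    (BQ : LinearMap.BilinForm ℤ Q)
    (hsymm : ∀ x y : Q, BQ x y = BQ y x)
    (hpos : ∀ x : Q, x ≠ 0 → 0 < BQ x x)
    (hB : Represents formB BQ) (hC : Represents formC BQ) :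
    ∀ (L : Type) [AddCommGroup L] [Module ℤ L] [Module.Free ℤ L] [Module.Finite ℤ L]
      (BL : LinearMap.BilinForm ℤ L),
      Represents BL formA → Represents BL BQ := by
  intro L _ _ _ _ BL hLA
  obtain ⟨φ, -, hφ⟩ := hB
  obtain ⟨ψ, -, hψ⟩ := hC
  have h11 : BQ (φ ![1, 0]) (φ ![1, 0]) = 1 := by rw [hφ, formB_apply]; norm_num
  have h22 : BQ (φ ![0, 1]) (φ ![0, 1]) = 1 := by rw [hφ, formB_apply]; norm_num
  have h12 : BQ (φ ![1, 0]) (φ ![0, 1]) = 0 := by rw [hφ, formB_apply]; norm_num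
  have q1 : BQ (ψ ![1, 0, 0]) (ψ ![1, 0, 0]) = 2 := by rw [hψ, formC_apply]; norm_num [Matrix.cons_val_two]
  have q2 : BQ (ψ ![0, 1, 0]) (ψ ![0, 1, 0]) = 2 := by rw [hψ, formC_apply]; norm_num [Matrix.cons_val_two]
  have q3 : BQ (ψ ![0, 0, 1]) (ψ ![0, 0, 1]) = 2 := by rw [hψ, formC_apply]; norm_num [Matrix.cons_val_two]
  have o12 : BQ (ψ ![1, 0, 0]) (ψ ![0, 1, 0]) = 0 := by rw [hψ, formC_apply]; norm_num [Matrix.cons_val_two]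
  have o13 : BQ (ψ ![1, 0, 0]) (ψ ![0, 0, 1]) = 0 := by rw [hψ, formC_apply]; norm_num [Matrix.cons_val_two]
  have o23 : BQ (ψ ![0, 1, 0]) (ψ ![0, 0, 1]) = 0 := by rw [hψ, formC_apply]; norm_num [Matrix.cons_val_two]
  obtain ⟨x, y, z, hxx, hyy, hzz, hxy, hxz, hyz⟩ :=
    key BQ hsymm hpos (φ ![1, 0]) (φ ![0, 1]) (ψ ![1, 0, 0]) (ψ ![0, 1, 0]) (ψ ![0, 0, 1])
      h11 h22 h12 q1 q2 q3 o12 o13 o23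
  have hQA : Represents formA BQ :=
    reprA_of_triple BQ hsymm x y z hxx hyy hzz hxy hxz hyz
  obtain ⟨ι, hιinj, hι⟩ := hLA
  obtain ⟨j, hjinj, hj⟩ := hQA
  exact ⟨j.comp ι, hjinj.comp hιinj, fun a b => by
    simp only [LinearMap.comp_apply, hj, hι]⟩
end
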